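/- For every R with 0 < R < (1/2)·√(3/(8π)), the map T sends the set C_R^0 into itself; that is, if (m̃,ρ̃) ∈ C_R^0 then T[m̃,ρ̃] ∈ C_R^0. -/

import Mathlib

open Real Set MeasureTheory

noncomputable section

/-- `ρ₀(R) = (16π/3)R²`. -/
def rho0R (R : ℝ) : ℝ := 16 * π / 3 * R ^ 2

/-- Membership in the set `C_R^0`. -/
def memC (R : ℝ) (m ρ : ℝ → ℝ) : Prop :=
  ContinuousOn m (Icc 0 R) ∧ ContinuousOn ρ (Icc 0 R) ∧
  ∀ r ∈ Icc (0:ℝ) R,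
    0 ≤ m r ∧ m r ≤ 4 * π / 3 * rho0R R * r ^ 3 ∧ 0 ≤ ρ r ∧ ρ r ≤ rho0R R

/-- `M[ρ̃](r) = ∫₀^r 4πs²ρ̃(s) ds`. -/
def Mop (ρ : ℝ → ℝ) (r : ℝ) : ℝ := ∫ s in (0:ℝ)..r, 4 * π * s ^ 2 * ρ s

/-- `P[m̃,ρ̃](r)`. -/
def Pop (R : ℝ) (m ρ : ℝ → ℝ) (r : ℝ) : ℝ :=
  ∫ s in r..R, (1 + 2 * ρ s) / (1 - 8 * π / 3 * s ^ 2 - 2 * m s / s) *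
    (4 * π * s / 3) * (1 + 3 * ρ s + 3 * m s / (4 * π * s ^ 3))

private lemma polyineq (x : ℝ) (h0 : 0 ≤ x) (h2 : x ≤ 1/2) :
    (1+2*x)*(1+4*x)*(4-x-x^2) ≤ 16*(2-x-x^2) := by
  have h : 0 ≤ 1/2 - x := by linarith
  nlinarith [mul_nonneg h h0, mul_nonneg (mul_nonneg h h0) h0,
    mul_nonneg (mul_nonneg (mul_nonneg h h0) h0) h0, mul_nonneg (mul_nonneg h h) h0,
    mul_nonneg (mul_nonneg (mul_nonneg h h) h0) h0, mul_nonneg (mul_nonneg h h) h,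
    mul_nonneg (mul_nonneg (mul_nonneg h h) h) h, mul_nonneg (mul_nonneg (mul_nonneg h h) h) h0]

set_option maxHeartbeats 2000000 in
/-- For `0 < R < (1/2)√(3/(8π))` the map `T = (M, P)` sends `C_R^0` into itself. -/
theorem stmt1 :
    ∀ R : ℝ, 0 < R → R < 1 / 2 * Real.sqrt (3 / (8 * π)) →
      ∀ m ρ : ℝ → ℝ, memC R m ρ → memC R (Mop ρ) (Pop R m ρ) := by
  intro R hR0 hRlt m ρ hC
  obtain ⟨hmc, hρc, hb⟩ := hC
  have hπ : (0:ℝ) < π := Real.pi_pos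
  set x : ℝ := rho0R R with hxdef
  have hxval : x = 16 * π / 3 * R ^ 2 := rfl
  have hx0 : 0 ≤ x := by rw [hxval]; positivity
  -- `x ≤ 1/2`
  have hx2 : x ≤ 1/2 := by
    have h38 : (0:ℝ) ≤ 3 / (8*π) := by positivity
    have hsq : R^2 < (1/2 * Real.sqrt (3/(8*π)))^2 :=
      pow_lt_pow_left₀ hRlt hR0.le (by norm_num)
    rw [mul_pow, Real.sq_sqrt h38] at hsq
    have hmul : R^2 * (32*π) < ((1/2)^2 * (3/(8*π))) * (32*π) := by
      exact mul_lt_mul_of_pos_right hsq (by positivity)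
    have h32 : ((1/2:ℝ)^2 * (3/(8*π))) * (32*π) = 3 := by field_simp; ring
    rw [h32] at hmul
    rw [hxval]; nlinarith [hmul]
  -- abbreviations
  set a : ℝ := 8 * π / 3 * (1 + x) with hadef
  have ha0 : 0 ≤ a := by
    have : (0:ℝ) ≤ 1 + x := by linarith
    rw [hadef]; positivity
  set u : ℝ := a * R ^ 2 with hudef
  have hu : u = x * (1 + x) / 2 := by rw [hudef, hadef, hxval]; ring
  have hu38 : u ≤ 3/8 := by rw [hu]; nlinarith
  have hu0 : 0 ≤ u := hudef ▸ mul_nonneg ha0 (sq_nonneg R)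
  set e : ℝ := 1 - u with hedef
  have he0 : (0:ℝ) < e := by rw [hedef]; linarith
  set c1 : ℝ := (1 + 2*x) * (4*π/3) * (1 + 4*x) with hc1def
  have hc10 : 0 ≤ c1 := by
    have h1 : (0:ℝ) ≤ 1 + 2*x := by linarith
    have h2 : (0:ℝ) ≤ 1 + 4*x := by linarith
    exact mul_nonneg (mul_nonneg h1 (by positivity)) h2
  set c3 : ℝ := c1 * (a / e) with hc3def
  have hc30 : 0 ≤ c3 := mul_nonneg hc10 (div_nonneg ha0 he0.le)
  set g : ℝ → ℝ := fun s => c1 * s + c3 * s^3 with hgdef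
  set f : ℝ → ℝ := fun s => (1 + 2 * ρ s) / (1 - 8 * π / 3 * s ^ 2 - 2 * m s / s) *
    (4 * π * s / 3) * (1 + 3 * ρ s + 3 * m s / (4 * π * s ^ 3)) with hfdef
  have hPop : ∀ r, Pop R m ρ r = ∫ s in r..R, f s := fun r => rfl
  -- key pointwise facts on (0, R]
  have hDkey : ∀ s ∈ Ioc (0:ℝ) R, e ≤ 1 - 8 * π / 3 * s ^ 2 - 2 * m s / s := by
    intro s hs
    obtain ⟨hm0, hm1, hρ0, hρ1⟩ := hb s ⟨hs.1.le, hs.2⟩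
    have hms : 2 * m s / s ≤ 8*π/3 * x * s^2 := by
      rw [div_le_iff₀ hs.1]; nlinarith [hm1]
    have hsle : s^2 ≤ R^2 := by nlinarith [hs.1, hs.2]
    have hau : a * s^2 ≤ u := by rw [hudef]; exact mul_le_mul_of_nonneg_left hsle ha0
    have : a * s^2 = 8*π/3*s^2 + 8*π/3*x*s^2 := by rw [hadef]; ring
    rw [hedef]; linarith
  have key : ∀ s ∈ Ioc (0:ℝ) R, 0 ≤ f s ∧ f s ≤ g s := by
    intro s hs
    obtain ⟨hm0, hm1, hρ0, hρ1⟩ := hb s ⟨hs.1.le, hs.2⟩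
    have hs0 : (0:ℝ) < s := hs.1
    have hD := hDkey s hs
    have hDpos : 0 < 1 - 8 * π / 3 * s ^ 2 - 2 * m s / s := lt_of_lt_of_le he0 hD
    have hsle : s^2 ≤ R^2 := by nlinarith [hs.2]
    have hau : a * s^2 ≤ u := by rw [hudef]; exact mul_le_mul_of_nonneg_left hsle ha0
    have has0 : 0 ≤ a * s^2 := mul_nonneg ha0 (sq_nonneg s)
    have htpos : 0 < 1 - a * s^2 := by linarith
    have h1as : 1 - a * s^2 ≤ 1 - 8 * π / 3 * s ^ 2 - 2 * m s / s := by
      have hms : 2 * m s / s ≤ 8*π/3 * x * s^2 := by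
        rw [div_le_iff₀ hs0]; nlinarith [hm1]
      have : a * s^2 = 8*π/3*s^2 + 8*π/3*x*s^2 := by rw [hadef]; ring
      linarith
    -- the third factor
    have hq0 : 0 ≤ 3 * m s / (4*π*s^3) := by positivity
    have hq : 3 * m s / (4*π*s^3) ≤ x := by
      rw [div_le_iff₀ (by positivity)]; nlinarith [hm1]
    have hB0 : 0 ≤ 1 + 3 * ρ s + 3 * m s / (4 * π * s ^ 3) := by linarith
    have hB : 1 + 3 * ρ s + 3 * m s / (4 * π * s ^ 3) ≤ 1 + 4*x := by linarith
    -- the first factor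
    have hA0 : 0 ≤ (1 + 2 * ρ s) / (1 - 8 * π / 3 * s ^ 2 - 2 * m s / s) :=
      div_nonneg (by linarith) hDpos.le
    have hA1 : (1 + 2 * ρ s) / (1 - 8 * π / 3 * s ^ 2 - 2 * m s / s)
        ≤ (1 + 2*x) / (1 - a * s^2) :=
      div_le_div₀ (by linarith) (by linarith) htpos h1as
    have hinv : (1:ℝ) / (1 - a*s^2) ≤ 1 + (a*s^2)/e := by
      have hid : (1:ℝ) / (1 - a*s^2) = 1 + (a*s^2)/(1 - a*s^2) := by
        field_simp; ring
      have h2 : (a*s^2)/(1 - a*s^2) ≤ (a*s^2)/e :=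
        div_le_div_of_nonneg_left has0 he0 (by rw [hedef]; linarith)
      linarith [hid ▸ le_refl ((1:ℝ)/(1-a*s^2)), h2, hid.le]
    have hA2 : (1 + 2*x) / (1 - a * s^2) ≤ (1 + 2*x) * (1 + (a*s^2)/e) := by
      rw [div_eq_mul_one_div]
      exact mul_le_mul_of_nonneg_left hinv (by linarith)
    have hA : (1 + 2 * ρ s) / (1 - 8 * π / 3 * s ^ 2 - 2 * m s / s)
        ≤ (1 + 2*x) * (1 + (a*s^2)/e) := le_trans hA1 hA2
    have hA0' : 0 ≤ (1 + 2*x) * (1 + (a*s^2)/e) :=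
      mul_nonneg (by linarith) (by positivity)
    constructor
    · show 0 ≤ _ / _ * (4 * π * s / 3) * _
      exact mul_nonneg (mul_nonneg hA0 (by positivity)) hB0
    · show _ / _ * (4 * π * s / 3) * _ ≤ g s
      have step : (1 + 2 * ρ s) / (1 - 8 * π / 3 * s ^ 2 - 2 * m s / s) *
          (4 * π * s / 3) * (1 + 3 * ρ s + 3 * m s / (4 * π * s ^ 3))
          ≤ (1 + 2*x) * (1 + (a*s^2)/e) * (4 * π * s / 3) * (1 + 4*x) := by
        have h1 : (1 + 2 * ρ s) / (1 - 8 * π / 3 * s ^ 2 - 2 * m s / s) * (4 * π * s / 3)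
            ≤ (1 + 2*x) * (1 + (a*s^2)/e) * (4 * π * s / 3) :=
          mul_le_mul_of_nonneg_right hA (by positivity)
        exact mul_le_mul h1 hB hB0 (mul_nonneg hA0' (by positivity))
      have heq : (1 + 2*x) * (1 + (a*s^2)/e) * (4 * π * s / 3) * (1 + 4*x) = g s := by
        rw [hgdef]; simp only; rw [hc3def, hc1def]; field_simp
      linarith [step, heq.le, heq.ge]
  have hf00 : f 0 = 0 := by rw [hfdef]; simp
  have keyIcc : ∀ r ∈ Icc (0:ℝ) R, ∀ s ∈ Icc r R, 0 ≤ f s ∧ f s ≤ g s := by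
    intro r hr s hs
    have hs' : s ∈ Icc (0:ℝ) R := ⟨le_trans hr.1 hs.1, hs.2⟩
    rcases eq_or_lt_of_le hs'.1 with h | h
    · refine ⟨by rw [← h, hf00], ?_⟩
      rw [← h, hf00, hgdef]; simp
    · exact key s ⟨h, hs'.2⟩
  -- continuity of f on (0, R]
  have hfc : ContinuousOn f (Ioc 0 R) := by
    have hmc' : ContinuousOn m (Ioc 0 R) := hmc.mono Ioc_subset_Icc_self
    have hρc' : ContinuousOn ρ (Ioc 0 R) := hρc.mono Ioc_subset_Icc_self
    have hid : ContinuousOn (fun s : ℝ => s) (Ioc 0 R) := continuousOn_id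
    rw [hfdef]
    apply ContinuousOn.mul
    apply ContinuousOn.mul
    · apply ContinuousOn.div
      · exact continuousOn_const.add (continuousOn_const.mul hρc')
      · exact (continuousOn_const.sub (continuousOn_const.mul (hid.pow 2))).sub
          (((continuousOn_const.mul hmc').div hid) fun s hs => ne_of_gt hs.1)
      · intro s hs; exact ne_of_gt (lt_of_lt_of_le he0 (hDkey s hs))
    · exact ((continuous_const.mul continuous_id).div_const 3).continuousOn
    · refine (continuousOn_const.add (continuousOn_const.mul hρc')).add
        (((continuousOn_const.mul hmc').div (continuousOn_const.mul (hid.pow 3))) ?_)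
      intro s hs
      have : (0:ℝ) < s := hs.1
      exact mul_ne_zero (by positivity) (pow_ne_zero 3 this.ne')
  -- integrability of f
  have hfint : IntegrableOn f (Ioc 0 R) := by
    have hmeas : AEStronglyMeasurable f (volume.restrict (Ioc 0 R)) :=
      hfc.aestronglyMeasurable measurableSet_Ioc
    have hCint : Integrable (fun _ : ℝ => c1*R + c3*R^3) (volume.restrict (Ioc 0 R)) :=
      (integrableOn_const_iff).mpr (Or.inr measure_Ioc_lt_top)
    refine hCint.mono' hmeas ?_
    refine (ae_restrict_iff' measurableSet_Ioc).mpr (ae_of_all _ fun s hs => ?_)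
    obtain ⟨h1, h2⟩ := key s hs
    rw [Real.norm_eq_abs, abs_of_nonneg h1]
    have hgb : g s ≤ c1*R + c3*R^3 := by
      rw [hgdef]; simp only
      have hs1 : 0 ≤ s := hs.1.le
      have hs2 : s ≤ R := hs.2
      gcongr
    linarith
  have hfii : ∀ r ∈ Icc (0:ℝ) R, IntervalIntegrable f volume r R := fun r hr =>
    (intervalIntegrable_iff_integrableOn_Ioc_of_le hr.2).mpr
      (hfint.mono_set (Ioc_subset_Ioc_left hr.1))
  have hfii0 : ∀ r ∈ Icc (0:ℝ) R, IntervalIntegrable f volume 0 r := fun r hr =>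
    (intervalIntegrable_iff_integrableOn_Ioc_of_le hr.1).mpr
      (hfint.mono_set (Ioc_subset_Ioc_right hr.2))
  have hgcont : Continuous g := by
    rw [hgdef]
    exact (continuous_const.mul continuous_id).add (continuous_const.mul (continuous_pow 3))
  -- continuity of Pop
  have hPc : ContinuousOn (Pop R m ρ) (Icc 0 R) := by
    have hfIcc : IntegrableOn f (Icc 0 R) := (integrableOn_Icc_iff_integrableOn_Ioc).mpr hfint
    have hprim : ContinuousOn (fun r => ∫ s in (0:ℝ)..r, f s) (Icc 0 R) := by
      have h0 : IntegrableOn f (uIcc 0 R) := by rwa [uIcc_of_le hR0.le]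
      have := intervalIntegral.continuousOn_primitive_interval h0
      rwa [uIcc_of_le hR0.le] at this
    have hcc : ContinuousOn (fun r : ℝ => (∫ s in (0:ℝ)..R, f s) - ∫ s in (0:ℝ)..r, f s)
        (Icc 0 R) := continuousOn_const.sub hprim
    refine hcc.congr fun r hr => ?_
    rw [hPop]
    have := intervalIntegral.integral_add_adjacent_intervals (hfii0 r hr) (hfii r hr)
    linarith
  -- continuity of Mop
  have hhc : ContinuousOn (fun s : ℝ => 4 * π * s ^ 2 * ρ s) (Icc 0 R) :=
    ((continuous_const.mul (continuous_pow 2)).continuousOn).mul hρc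
  have hMc : ContinuousOn (Mop ρ) (Icc 0 R) := by
    have h0 : IntegrableOn (fun s : ℝ => 4 * π * s ^ 2 * ρ s) (uIcc 0 R) := by
      rw [uIcc_of_le hR0.le]; exact hhc.integrableOn_Icc
    have := intervalIntegral.continuousOn_primitive_interval h0
    rw [uIcc_of_le hR0.le] at this
    exact this
  refine ⟨hMc, hPc, fun r hr => ⟨?_, ?_, ?_, ?_⟩⟩
  · -- 0 ≤ Mop ρ r
    refine intervalIntegral.integral_nonneg hr.1 fun s hs => ?_
    obtain ⟨_, _, hρ0, _⟩ := hb s ⟨hs.1, le_trans hs.2 hr.2⟩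
    positivity
  · -- Mop ρ r ≤ 4π/3 x r³
    have h1 : Mop ρ r ≤ ∫ s in (0:ℝ)..r, 4*π*x * s^2 := by
      refine intervalIntegral.integral_mono_on hr.1 ?_ ?_ fun s hs => ?_
      · refine ContinuousOn.intervalIntegrable ?_
        rw [uIcc_of_le hr.1]
        exact hhc.mono (Icc_subset_Icc_right hr.2)
      · exact (continuous_const.mul (continuous_pow 2)).intervalIntegrable _ _
      · obtain ⟨_, _, hρ0, hρ1⟩ := hb s ⟨hs.1, le_trans hs.2 hr.2⟩
        have hs2 : (0:ℝ) ≤ s^2 := sq_nonneg s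
        nlinarith [mul_le_mul_of_nonneg_left hρ1 (mul_nonneg (by positivity : (0:ℝ) ≤ 4*π) hs2)]
    have h2 : ∫ s in (0:ℝ)..r, 4*π*x * s^2 = 4*π/3*x*r^3 := by
      rw [intervalIntegral.integral_const_mul, integral_pow]
      norm_num; ring
    show Mop ρ r ≤ 4 * π / 3 * x * r ^ 3
    linarith
  · -- 0 ≤ Pop r
    rw [hPop]
    exact intervalIntegral.integral_nonneg hr.2 fun s hs => (keyIcc r hr s hs).1
  · -- Pop r ≤ x
    rw [hPop]
    have h1 : ∫ s in r..R, f s ≤ ∫ s in r..R, g s :=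
      intervalIntegral.integral_mono_on hr.2 (hfii r hr)
        (hgcont.intervalIntegrable _ _) fun s hs => (keyIcc r hr s hs).2
    have h2 : ∫ s in r..R, g s = c1*(R^2-r^2)/2 + c3*(R^4-r^4)/4 := by
      have e1 : ∫ s in r..R, g s = (∫ s in r..R, c1*s) + ∫ s in r..R, c3*s^3 := by
        rw [hgdef]
        exact intervalIntegral.integral_add
          ((continuous_const.mul continuous_id).intervalIntegrable _ _)
          ((continuous_const.mul (continuous_pow 3)).intervalIntegrable _ _)
      rw [e1, intervalIntegral.integral_const_mul, intervalIntegral.integral_const_mul,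
        integral_id, integral_pow]
      norm_num; ring
    have h3 : c1*(R^2-r^2)/2 + c3*(R^4-r^4)/4 ≤ c1*R^2/2 + c3*R^4/4 := by
      have hr2 : 0 ≤ r^2 := sq_nonneg r
      have hr4 : 0 ≤ r^4 := by positivity
      nlinarith [mul_nonneg hc10 hr2, mul_nonneg hc30 hr4]
    have hpoly := polyineq x hx0 hx2
    have hc1R : c1*R^2 = x/4*((1+2*x)*(1+4*x)) := by rw [hc1def, hxval]; ring
    have hc3R : c3*R^4 = c1*R^2*u/e := by rw [hc3def, hudef]; ring
    have hnum : 0 ≤ 16*e - 2*((1+2*x)*(1+4*x))*e - (1+2*x)*(1+4*x)*u := by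
      rw [hedef, hu]; nlinarith [hpoly]
    have hne : e ≠ 0 := ne_of_gt he0
    have hiden : x - (x/4*((1+2*x)*(1+4*x))/2 + x/4*((1+2*x)*(1+4*x))*u/e/4)
        = x*(16*e - 2*((1+2*x)*(1+4*x))*e - (1+2*x)*(1+4*x)*u)/(16*e) := by
      field_simp; ring
    have h4 : c1*R^2/2 + c3*R^4/4 ≤ x := by
      rw [hc3R, hc1R]
      have hnn : 0 ≤ x*(16*e - 2*((1+2*x)*(1+4*x))*e - (1+2*x)*(1+4*x)*u)/(16*e) :=
        div_nonneg (mul_nonneg hx0 hnum) (by linarith)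
      linarith [hiden ▸ hnn]
    linarith
end
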